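/- Let X be a non-reflexive separable Banach space and θ ∈ (0,1). Then there exists a sequence (f_n) in the closed unit ball of X* converging pointwise to 0 on X such that ‖f‖ ≥ θ for every f in the convex hull of {f_n : n ∈ ℕ}. -/

import Mathlib

open Filter NormedSpace

/-- A double-dual element vanishing on the annihilator of a finite-dimensional subspace
is in the image of the canonical embedding. -/
lemma vanish_on_annihilator {X : Type*} [NormedAddCommGroup X] [NormedSpace ℝ X]
    (Y : Submodule ℝ X) [FiniteDimensional ℝ Y]
    (H : StrongDual ℝ (StrongDual ℝ X))
    (hH : ∀ f : X →L[ℝ] ℝ, (∀ y ∈ Y, f y = 0) → H f = 0) :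
    ∃ y : X, H = inclusionInDoubleDual ℝ X y := by
  classical
  set b := Module.finBasis ℝ Y with hb
  have hext : ∀ i, ∃ g : X →L[ℝ] ℝ, ∀ z : Y,
      g z = (LinearMap.toContinuousLinearMap (b.coord i)) z := by
    intro i
    obtain ⟨g, hg, -⟩ := exists_extension_norm_eq Y
      (LinearMap.toContinuousLinearMap (b.coord i))
    exact ⟨g, hg⟩
  choose g hg using hext
  refine ⟨∑ i, H (g i) • ((b i : Y) : X), ?_⟩
  ext f
  have hφ : ∀ z ∈ Y, (f - ∑ j, f ((b j : Y) : X) • g j) z = 0 := by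
    intro z hz
    have hz' : ((⟨z, hz⟩ : Y) : X) = z := rfl
    have hrepr : (∑ j, b.repr ⟨z, hz⟩ j • (b j : Y)) = (⟨z, hz⟩ : Y) := b.sum_repr _
    have hfz : f z = ∑ j, b.repr ⟨z, hz⟩ j * f ((b j : Y) : X) := by
      conv_lhs => rw [← hz', ← hrepr]
      push_cast
      rw [map_sum]
      simp [smul_eq_mul]
    have hgz : ∀ j, g j z = b.repr ⟨z, hz⟩ j := by
      intro j
      have := hg j ⟨z, hz⟩
      simpa [hz'] using this
    simp only [ContinuousLinearMap.sub_apply, ContinuousLinearMap.sum_apply,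
      ContinuousLinearMap.smul_apply, smul_eq_mul, hfz, hgz]
    rw [sub_eq_zero]
    exact Finset.sum_congr rfl fun i _ => mul_comm _ _
  have h0 := hH _ hφ
  have : H f = ∑ j, f ((b j : Y) : X) * H (g j) := by
    have := h0
    simp only [map_sub, map_sum, map_smul, smul_eq_mul, sub_eq_zero] at this
    exact this
  rw [dual_def]
  simp only [map_sum, map_smul, smul_eq_mul, this]
  exact Finset.sum_congr rfl fun i _ => mul_comm _ _


/-- If `F₀` stays `θ'`-away from the image of `X` in the double dual, then for any
finite-dimensional subspace `Y` there is a norm-≤1 functional vanishing on `Y` on which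
`F₀` is at least `θ < θ'`. -/
lemma key_functional {X : Type*} [NormedAddCommGroup X] [NormedSpace ℝ X]
    (F₀ : StrongDual ℝ (StrongDual ℝ X)) (θ θ' : ℝ) (hθ : 0 ≤ θ) (hθθ' : θ < θ')
    (hF₀ : ∀ x : X, θ' ≤ ‖F₀ - inclusionInDoubleDual ℝ X x‖)
    (Y : Submodule ℝ X) [FiniteDimensional ℝ Y] :
    ∃ f : X →L[ℝ] ℝ, ‖f‖ ≤ 1 ∧ (∀ y ∈ Y, f y = 0) ∧ θ ≤ F₀ f := by
  by_contra hcon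
  push_neg at hcon
  have hbound : ∀ f : StrongDual ℝ X, (∀ y ∈ Y, f y = 0) → |F₀ f| ≤ θ * ‖f‖ := by
    intro f hf
    rcases eq_or_ne f 0 with rfl | hne
    · simp
    · have hnorm : (0:ℝ) < ‖f‖ := norm_pos_iff.mpr hne
      set g := ‖f‖⁻¹ • f with hgdef
      have hgnorm : ‖g‖ ≤ 1 := by
        rw [hgdef, norm_smul, norm_inv, norm_norm, inv_mul_cancel₀ hnorm.ne']
      have hgY : ∀ y ∈ Y, g y = 0 := by
        intro y hy; simp [hgdef, hf y hy]
      have h1 : F₀ g < θ := hcon g hgnorm hgY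
      have h2 : F₀ (-g) < θ := hcon (-g) (by simpa using hgnorm)
        (by intro y hy; simp [hgY y hy])
      rw [map_neg] at h2
      have habs : |F₀ g| ≤ θ := (abs_lt.mpr ⟨by linarith, h1⟩).le
      have hfg : f = ‖f‖ • g := by
        rw [hgdef, smul_smul, mul_inv_cancel₀ hnorm.ne', one_smul]
      rw [hfg, map_smul, smul_eq_mul, abs_mul, abs_of_pos hnorm]
      have : ‖(‖f‖ • g)‖ = ‖f‖ := by rw [← hfg]
      rw [this]
      nlinarith [abs_nonneg (F₀ g)]
  set S : @Submodule ℝ (StrongDual ℝ X) _ _ NormedSpace.toModule :=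
    { carrier := {f | ∀ y ∈ Y, f y = 0}
      add_mem' := fun ha hb y hy => by
        simp [ha y hy, hb y hy]
      zero_mem' := fun y hy => rfl
      smul_mem' := fun c a ha y hy => by simp [ha y hy] } with hSdef
  set r : S →L[ℝ] ℝ := F₀.comp (Submodule.subtypeL S) with hrdef
  have hrnorm : ‖r‖ ≤ θ := by
    refine ContinuousLinearMap.opNorm_le_bound r hθ fun f => ?_
    have := hbound f.1 f.2
    simpa [hrdef, Real.norm_eq_abs] using this
  obtain ⟨G, hGe, hGn⟩ := exists_extension_norm_eq S r
  have hvanish : ∀ f : StrongDual ℝ X, (∀ y ∈ Y, f y = 0) → (F₀ - G) f = 0 := by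
    intro f hf
    have : G f = r ⟨f, hf⟩ := hGe ⟨f, hf⟩
    simp [this, hrdef]
  obtain ⟨y, hy⟩ := vanish_on_annihilator Y (F₀ - G) hvanish
  have h1 : ‖F₀ - inclusionInDoubleDual ℝ X y‖ ≤ θ := by
    have : F₀ - inclusionInDoubleDual ℝ X y = G := by
      rw [← hy]; abel
    rw [this, hGn]
    exact hrnorm
  linarith [hF₀ y]

/-- In a non-reflexive separable Banach space, for each `θ ∈ (0,1)` there is a sequence in
the closed dual unit ball converging pointwise to `0` whose convex hull stays `θ`-away
from `0` in norm. -/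
theorem nonreflexive_separable_dual_sequence {X : Type*} [NormedAddCommGroup X]
    [NormedSpace ℝ X] [CompleteSpace X] [TopologicalSpace.SeparableSpace X]
    (hnr : ¬ Function.Surjective (NormedSpace.inclusionInDoubleDual ℝ X))
    (θ : ℝ) (hθ : θ ∈ Set.Ioo (0:ℝ) 1) :
    ∃ f : ℕ → (X →L[ℝ] ℝ), (∀ n, ‖f n‖ ≤ 1) ∧
      (∀ x : X, Tendsto (fun n => f n x) atTop (nhds 0)) ∧
      (∀ g ∈ convexHull ℝ (Set.range f), θ ≤ ‖g‖) := by
  classical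
  obtain ⟨hθ0, hθ1⟩ := hθ
  set θ' : ℝ := (1 + θ) / 2 with hθ'def
  have hθθ' : θ < θ' := by rw [hθ'def]; linarith
  have hθ'1 : θ' < 1 := by rw [hθ'def]; linarith
  have hθ'0 : 0 < θ' := by rw [hθ'def]; linarith
  set J := NormedSpace.inclusionInDoubleDual ℝ X with hJ
  set R : Submodule ℝ (StrongDual ℝ (StrongDual ℝ X)) :=
    LinearMap.range (J : X →ₗ[ℝ] _) with hR
  have hRmem : ∀ z, z ∈ R ↔ ∃ x, J x = z := fun z => LinearMap.mem_range
  have hRclosed : IsClosed (R : Set (StrongDual ℝ (StrongDual ℝ X))) := by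
    have : (R : Set (StrongDual ℝ (StrongDual ℝ X))) = Set.range (NormedSpace.inclusionInDoubleDualLi ℝ (E := X)) := by
      ext z
      simp only [SetLike.mem_coe, hRmem, Set.mem_range]
      rfl
    rw [this]
    have h := (NormedSpace.inclusionInDoubleDualLi ℝ (E := X)).isometry
    exact (Isometry.isClosedEmbedding (α := X)
      (γ := StrongDual ℝ (StrongDual ℝ X)) h).isClosed_range
  have hRne : ∃ z, z ∉ R := by
    obtain ⟨z, hz⟩ := not_forall.mp fun h => hnr fun z => (hRmem z).mp (h z)
    exact ⟨z, fun hmem => hz ((hRmem z).mp hmem)⟩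
  obtain ⟨x₀, hx₀R, hx₀⟩ := @riesz_lemma ℝ _ (StrongDual ℝ (StrongDual ℝ X)) _ ContinuousLinearMap.toNormedSpace R hRclosed hRne θ' hθ'1
  have hx₀ne : x₀ ≠ 0 := fun h => hx₀R (h ▸ R.zero_mem)
  have hx₀pos : (0:ℝ) < ‖x₀‖ := (norm_pos_iff (a := x₀)).mpr hx₀ne
  set F₀ := ‖x₀‖⁻¹ • x₀ with hF₀def
  have hns : ∀ (c : ℝ) (z : StrongDual ℝ (StrongDual ℝ X)), ‖c • z‖ = ‖c‖ * ‖z‖ :=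
    @norm_smul ℝ (StrongDual ℝ (StrongDual ℝ X)) _ _ _ (@NormedSpace.toNormSMulClass ℝ (StrongDual ℝ (StrongDual ℝ X)) _ _ ContinuousLinearMap.toNormedSpace)
  have hF₀norm : ‖F₀‖ = 1 := by
    rw [hF₀def, hns, norm_inv, Real.norm_of_nonneg hx₀pos.le, inv_mul_cancel₀ hx₀pos.ne']
  have hF₀far : ∀ x : X, θ' ≤ ‖F₀ - J x‖ := by
    intro x
    have hmem : (‖x₀‖ • J x) ∈ R := R.smul_mem _ ((hRmem _).mpr ⟨x, rfl⟩)
    have h1 := hx₀ _ hmem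
    have h2 : F₀ - J x = ‖x₀‖⁻¹ • (x₀ - ‖x₀‖ • J x) := by
      ext f
      simp only [hF₀def, ContinuousLinearMap.sub_apply, ContinuousLinearMap.smul_apply, smul_eq_mul]
      field_simp
    rw [h2, hns, norm_inv, Real.norm_of_nonneg hx₀pos.le]
    calc θ' = ‖x₀‖⁻¹ * (θ' * ‖x₀‖) := by field_simp
    _ ≤ ‖x₀‖⁻¹ * ‖x₀ - ‖x₀‖ • J x‖ := by
        apply mul_le_mul_of_nonneg_left h1 (inv_nonneg.mpr hx₀pos.le)
  obtain ⟨u, hu⟩ := TopologicalSpace.exists_dense_seq X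
  have hchoice : ∀ n : ℕ, ∃ f : X →L[ℝ] ℝ, ‖f‖ ≤ 1 ∧
      (∀ y ∈ Submodule.span ℝ (u '' Set.Iic n), f y = 0) ∧ θ ≤ F₀ f := by
    intro n
    haveI : FiniteDimensional ℝ (Submodule.span ℝ (u '' Set.Iic n)) :=
      FiniteDimensional.span_of_finite ℝ ((Set.finite_Iic n).image u)
    exact key_functional F₀ θ θ' hθ0.le hθθ' hF₀far _
  choose f hf1 hf2 hf3 using hchoice
  refine ⟨f, hf1, ?_, ?_⟩
  · intro x
    rw [Metric.tendsto_atTop]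
    intro ε hε
    obtain ⟨k, hk⟩ : ∃ k, dist x (u k) < ε := by
      have := hu.exists_dist_lt x hε
      simpa using this
    refine ⟨k, fun n hn => ?_⟩
    have hzero : f n (u k) = 0 :=
      hf2 n (u k) (Submodule.subset_span ⟨k, Set.mem_Iic.mpr hn, rfl⟩)
    have : f n x = f n (x - u k) := by rw [map_sub, hzero, sub_zero]
    rw [Real.dist_eq, sub_zero, this, ← Real.norm_eq_abs]
    calc ‖f n (x - u k)‖ ≤ ‖f n‖ * ‖x - u k‖ := (f n).le_opNorm _
    _ ≤ 1 * ‖x - u k‖ := by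
        apply mul_le_mul_of_nonneg_right (hf1 n) (norm_nonneg _)
    _ = dist x (u k) := by rw [one_mul, dist_eq_norm]
    _ < ε := hk
  · intro g hg
    have hconv : Convex ℝ {h : StrongDual ℝ X | θ ≤ F₀ h} :=
      convex_halfSpace_ge ⟨fun a b => map_add F₀ a b, fun c a => map_smul F₀ c a⟩ θ
    have hsub : Set.range f ⊆ {h : StrongDual ℝ X | θ ≤ F₀ h} := by
      rintro - ⟨n, rfl⟩
      exact hf3 n
    have hθg : θ ≤ F₀ g := convexHull_min hsub hconv hg
    calc θ ≤ F₀ g := hθg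
    _ ≤ ‖F₀ g‖ := le_abs_self _
    _ ≤ ‖F₀‖ * ‖g‖ := F₀.le_opNorm g
    _ = ‖g‖ := by rw [hF₀norm, one_mul]
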